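/- Let U(z) be as in the dispensing problem with utilities satisfying u_i(y) - u_i(y-1) > c for y ≤ A_i. If z ≤ Σ_i A_i then U(z) - U(z-1) > c, and if z > Σ_i A_i then U(z) - U(z-1) = 0. -/

import Mathlib

theorem stmt_9 (m : ℕ) (A : Fin m → ℕ) (u : Fin m → ℕ → ℝ) (c : ℝ) (hc : 0 < c)
    (hconc : ∀ i : Fin m, ∀ y : ℕ, 1 ≤ y → y + 1 ≤ A i →
      u i y - u i (y - 1) ≥ u i (y + 1) - u i y)
    (hinc : ∀ i : Fin m, ∀ y : ℕ, 1 ≤ y → y ≤ A i → u i y - u i (y - 1) > c)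
    (U : ℕ → ℝ)
    (hU : ∀ z : ℕ, IsGreatest
      {t : ℝ | ∃ y : Fin m → ℕ, (∀ i, y i ≤ A i) ∧ (∑ i, y i) ≤ z ∧ t = ∑ i, u i (y i)}
      (U z)) :
    ∀ z : ℕ, 1 ≤ z →
      (z ≤ (∑ i, A i) → U z - U (z - 1) > c) ∧
      (z > (∑ i, A i) → U z - U (z - 1) = 0) := by
  intro z hz
  obtain ⟨⟨y, hyA, hys, hyeq⟩, hub⟩ := hU (z - 1)
  obtain ⟨⟨w, hwA, hws, hweq⟩, hub'⟩ := hU z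
  constructor
  · intro hzA
    have hlt : ∑ i, y i < ∑ i, A i := lt_of_le_of_lt hys (by omega)
    have hex : ∃ i, y i < A i := by
      by_contra h
      push_neg at h
      have : ∑ i, A i ≤ ∑ i, y i := Finset.sum_le_sum (fun i _ => h i)
      omega
    obtain ⟨i, hi⟩ := hex
    set y' : Fin m → ℕ := Function.update y i (y i + 1) with hy'
    have hsum' : ∑ j, y' j = (∑ j, y j) + 1 := by
      rw [hy', Finset.sum_update_of_mem (Finset.mem_univ i)]
      rw [← Finset.sum_erase_add _ _ (Finset.mem_univ i)]
      simp [Finset.sdiff_singleton_eq_erase]; ring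
    have hdiff : ∑ j, u j (y' j) = (∑ j, u j (y j)) + (u i (y i + 1) - u i (y i)) := by
      have h1 : ∑ j, (u j (y' j) - u j (y j)) = u i (y i + 1) - u i (y i) := by
        rw [Finset.sum_eq_single i]
        · simp [hy']
        · intro j _ hj
          simp [hy', Function.update_of_ne hj]
        · intro h; exact absurd (Finset.mem_univ i) h
      have h2 : ∑ j, (u j (y' j) - u j (y j)) =
          (∑ j, u j (y' j)) - ∑ j, u j (y j) := Finset.sum_sub_distrib _ _
      linarith [h1, h2.symm]
    have hmem : (∑ j, u j (y' j)) ∈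
        {t : ℝ | ∃ yy : Fin m → ℕ, (∀ i, yy i ≤ A i) ∧ (∑ i, yy i) ≤ z ∧
          t = ∑ i, u i (yy i)} := by
      refine ⟨y', fun j => ?_, by omega, rfl⟩
      by_cases hji : j = i
      · subst hji; simp [hy']; omega
      · simp [hy', Function.update_of_ne hji]; exact hyA j
    have hUz : U z ≥ ∑ j, u j (y' j) := hub' hmem
    have hstep : u i (y i + 1) - u i (y i) > c := by
      have := hinc i (y i + 1) (by omega) (by omega)
      simpa using this
    rw [hyeq]
    linarith
  · intro hzA
    have h1 : U z ≤ U (z - 1) := by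
      refine hub ⟨w, hwA, ?_, hweq⟩
      have : ∑ i, w i ≤ ∑ i, A i := Finset.sum_le_sum (fun i _ => hwA i)
      omega
    have h2 : U (z - 1) ≤ U z := by
      refine hub' ⟨y, hyA, by omega, hyeq⟩
    linarith
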